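/- Let (w_m)_{m ≥ 1} be any orthonormal (Hilbert) basis of the complex Hilbert space L²(ℝ) indexed by the positive integers, and for integers n ≥ 1 and 0 ≤ k ≤ n−1 define h_{n,k} = (1/√n) ∑_{l=0}^{n−1} ( cos(2πkl/n) + sin(2πkl/n) ) w_{n(n−1)/2 + l + 1} ∈ L²(ℝ). Then for every n ≥ 1 and 0 ≤ k ≤ n−1, the sum of the absolute values of the basis coefficients of h_{n,k} satisfies ∑_{m=1}^∞ |⟨h_{n,k}, w_m⟩| = (1/√n) ∑_{l=0}^{n−1} | cos(2πkl/n) + sin(2πkl/n) | ≥ √(n/2). -/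

import Mathlib

open scoped BigOperators ENNReal ComplexOrder InnerProductSpace
open MeasureTheory

/-- The complex Hilbert space `L²(ℝ)`. -/
noncomputable abbrev L2R : Type := Lp ℂ 2 (volume : Measure ℝ)

/-- Given vectors `(w_m)` (indexed by `ℕ`, with `w m` playing the role of `w_{m+1}`), the vector
`h_{n,k} = (1/√n) ∑_{l=0}^{n-1} (cos(2πkl/n) + sin(2πkl/n)) w_{n(n-1)/2 + l + 1} ∈ L²(ℝ)`. -/
noncomputable def hvec (w : ℕ → L2R) (n k : ℕ) : L2R :=
  ((1 / Real.sqrt n : ℝ) : ℂ) • ∑ l ∈ Finset.range n,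
    ((Real.cos (2 * Real.pi * k * l / n) + Real.sin (2 * Real.pi * k * l / n) : ℝ) : ℂ) •
      w (n * (n - 1) / 2 + l)

/-- The eigenvalue `λ_{n,k} = (1/n³)(1 + k/nᵖ)`. -/
noncomputable def lam (p : ℝ) (n k : ℕ) : ℝ := (1 / (n : ℝ) ^ 3) * (1 + (k : ℝ) / (n : ℝ) ^ p)

/-- The rank-one operator `v ⊗ v̄ : f ↦ ⟨f, v⟩ v` (with `⟨f, v⟩ = ∫ f conj v`). -/
noncomputable def rankOneC {H : Type*} [NormedAddCommGroup H] [InnerProductSpace ℂ H]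
    (v : H) : H →L[ℂ] H := (innerSL ℂ v).smulRight v

-- auxiliary: sum of sines around the circle
lemma aux_sin_sum (n k : ℕ) (hn : 1 ≤ n) :
    ∑ l ∈ Finset.range n, Real.sin (2 * (2 * Real.pi * k * l / n)) = 0 := by
  have hn0 : (n : ℝ) ≠ 0 := Nat.cast_ne_zero.mpr (by omega)
  set θ : ℝ := 2 * (2 * Real.pi * k / n) with hθ
  set z : ℂ := Complex.exp ((θ : ℂ) * Complex.I) with hz
  have hzn : z ^ n = 1 := by
    rw [hz, ← Complex.exp_nat_mul]
    have : (n : ℂ) * ((θ : ℂ) * Complex.I) = ((2 * k : ℤ) : ℂ) * (2 * Real.pi * Complex.I) := by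
      push_cast [hθ]
      field_simp
    rw [this, Complex.exp_int_mul_two_pi_mul_I]
  have him : (∑ l ∈ Finset.range n, z ^ l).im = 0 := by
    rcases eq_or_ne z 1 with h | h
    · simp [h]
    · rw [geom_sum_eq h, hzn]
      simp
  rw [← him, Complex.im_sum]
  refine Finset.sum_congr rfl fun l _ => ?_
  have : z ^ l = Complex.exp (((θ * l : ℝ) : ℂ) * Complex.I) := by
    rw [hz, ← Complex.exp_nat_mul]
    push_cast
    ring_nf
  rw [this, Complex.exp_ofReal_mul_I_im]
  congr 1
  rw [hθ]
  field_simp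

theorem hvec_coefficient_l1_norm (w : HilbertBasis ℕ ℂ L2R) (n k : ℕ)
    (hn : 1 ≤ n) (hk : k ≤ n - 1) :
    (∑' m : ℕ, ‖⟪hvec (fun m => w m) n k, w m⟫_ℂ‖) =
        (1 / Real.sqrt n) * ∑ l ∈ Finset.range n,
          |Real.cos (2 * Real.pi * k * l / n) + Real.sin (2 * Real.pi * k * l / n)| ∧
      Real.sqrt (n / 2) ≤ ∑' m : ℕ, ‖⟪hvec (fun m => w m) n k, w m⟫_ℂ‖ := by
  have hn0 : (n : ℝ) ≠ 0 := Nat.cast_ne_zero.mpr (by omega)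
  have hn0' : (0 : ℝ) < n := by positivity
  set c : ℕ → ℝ := fun l =>
    Real.cos (2 * Real.pi * k * l / n) + Real.sin (2 * Real.pi * k * l / n) with hc
  set r : ℝ := 1 / Real.sqrt n with hr
  have hr0 : 0 ≤ r := by positivity
  set off : ℕ := n * (n - 1) / 2 with hoff
  have hortho := orthonormal_iff_ite.mp w.orthonormal
  have hinner : ∀ m, ⟪hvec (fun m => w m) n k, w m⟫_ℂ =
      ∑ l ∈ Finset.range n, ((r * c l : ℝ) : ℂ) * (if off + l = m then 1 else 0) := by
    intro m
    rw [hvec, inner_smul_left, sum_inner, Finset.mul_sum]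
    refine Finset.sum_congr rfl fun l _ => ?_
    rw [inner_smul_left, hortho (off + l) m, Complex.conj_ofReal, Complex.conj_ofReal]
    simp only [hr, hc]
    push_cast
    ring
  set S : Finset ℕ := (Finset.range n).image (fun l => off + l) with hS
  have hzero : ∀ m ∉ S, ‖⟪hvec (fun m => w m) n k, w m⟫_ℂ‖ = 0 := by
    intro m hm
    rw [hinner m]
    have : ∀ l ∈ Finset.range n, ((r * c l : ℝ) : ℂ) * (if off + l = m then 1 else 0) = 0 := by
      intro l hl
      have : off + l ≠ m := fun h => hm (Finset.mem_image.mpr ⟨l, hl, h⟩)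
      simp [this]
    rw [Finset.sum_eq_zero this]
    simp
  have hval : ∀ l ∈ Finset.range n,
      ‖⟪hvec (fun m => w m) n k, w (off + l)⟫_ℂ‖ = r * |c l| := by
    intro l hl
    rw [hinner (off + l), Finset.sum_eq_single l]
    · simp [Complex.norm_real, abs_mul, abs_of_nonneg hr0, Real.norm_eq_abs]
    · intro l' _ hne
      have : off + l' ≠ off + l := fun h => hne (by omega)
      simp [this, hne]
    · intro h; exact absurd hl h
  have htsum : (∑' m : ℕ, ‖⟪hvec (fun m => w m) n k, w m⟫_ℂ‖)
      = r * ∑ l ∈ Finset.range n, |c l| := by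
    rw [tsum_eq_sum hzero, hS,
      Finset.sum_image (fun a _ b _ h => by omega : ∀ a ∈ Finset.range n, ∀ b ∈ Finset.range n,
        off + a = off + b → a = b)]
    rw [Finset.mul_sum]
    exact Finset.sum_congr rfl hval
  constructor
  · exact htsum
  · rw [htsum]
    -- key: ∑ (c l)^2 = n
    have hsq : ∑ l ∈ Finset.range n, (c l) ^ 2 = n := by
      have heach : ∀ l ∈ Finset.range n,
          (c l) ^ 2 = 1 + Real.sin (2 * (2 * Real.pi * k * l / n)) := by
        intro l _
        rw [hc]
        have h1 := Real.sin_sq_add_cos_sq (2 * Real.pi * k * l / n)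
        have h2 := Real.sin_two_mul (2 * Real.pi * k * l / n)
        nlinarith [h1, h2]
      rw [Finset.sum_congr rfl heach, Finset.sum_add_distrib, aux_sin_sum n k hn]
      simp
    have hle : ∀ l, (c l) ^ 2 ≤ Real.sqrt 2 * |c l| := by
      intro l
      have h2 : (c l) ^ 2 ≤ 2 := by
        rw [hc]
        nlinarith [Real.sin_sq_add_cos_sq (2 * Real.pi * k * l / n),
          sq_nonneg (Real.cos (2 * Real.pi * k * l / n) - Real.sin (2 * Real.pi * k * l / n))]
      have habs : |c l| ≤ Real.sqrt 2 := by
        rw [← Real.sqrt_sq_eq_abs]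
        exact Real.sqrt_le_sqrt h2
      calc (c l) ^ 2 = |c l| * |c l| := by rw [← sq_abs]; ring
        _ ≤ Real.sqrt 2 * |c l| := mul_le_mul_of_nonneg_right habs (abs_nonneg _)
    have hkey : (n : ℝ) ≤ Real.sqrt 2 * ∑ l ∈ Finset.range n, |c l| := by
      rw [← hsq, Finset.mul_sum]
      exact Finset.sum_le_sum fun l _ => hle l
    have hs : (0 : ℝ) < Real.sqrt n := Real.sqrt_pos.mpr hn0'
    have ht : (0 : ℝ) < Real.sqrt 2 := by positivity
    have hs2 : Real.sqrt n * Real.sqrt n = n := Real.mul_self_sqrt hn0'.le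
    rw [show Real.sqrt ((n : ℝ) / 2) = Real.sqrt n / Real.sqrt 2 from
      Real.sqrt_div hn0'.le 2, hr, one_div_mul_eq_div, div_le_div_iff₀ ht hs]
    nlinarith [hkey]
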